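/- Algebraic core of the torsion criterion for linear combinations of local Heegner divisors (Lemma 3.5): let λ_1,…,λ_r ∈ W and a_1,…,a_r ∈ ℝ. The following are equivalent: (a) there exists Q ∈ ℝ such that Σ_i a_i·Im F_{λ_i}(t,t') = Q·Im⟨t',t⟩ for all t,t' ∈ W; (b) Σ_i a_i·[F_{λ_i}(t,t') − (⟨λ_i,λ_i⟩/n)·⟨t',t⟩] = 0 for all t,t' ∈ W. -/
import Mathlib


open Complex

/-- The form `F_λ(x,y) = ⟨x,λ⟩⟨y,λ⟩ + ⟨λ,x⟩⟨y,λ⟩ (= 2Re(⟨x,λ⟩)·⟨y,λ⟩)`. -/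
noncomputable def Fform {W : Type*} [AddCommGroup W] [Module ℂ W]
    (B : W →ₗ[ℂ] W →ₛₗ[starRingEnd ℂ] ℂ) (lam x y : W) : ℂ :=
  B x lam * B y lam + B lam x * B y lam

lemma trace_rankone {W : Type*} [AddCommGroup W] [Module ℂ W] [FiniteDimensional ℂ W]
    (f : W →ₗ[ℂ] ℂ) (v : W) : LinearMap.trace ℂ W (f.smulRight v) = f v := by
  have h : f.smulRight v = dualTensorHom ℂ W W (f ⊗ₜ v) := by
    ext x; simp [dualTensorHom_apply]
  rw [h, LinearMap.trace_eq_contract_apply, contractLeft_apply]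

/-- Algebraic core of the torsion criterion for linear combinations of local
Heegner divisors: `Σᵢ aᵢ·Im F_{λᵢ}(t,t')` is a real multiple of `Im⟨t',t⟩` iff
`Σᵢ aᵢ·[F_{λᵢ}(t,t') − (⟨λᵢ,λᵢ⟩/n)·⟨t',t⟩] = 0` for all `t,t'`. -/
theorem torsion_criterion_linear_combination {W : Type*} [AddCommGroup W]
    [Module ℂ W] [FiniteDimensional ℂ W]
    (n : ℕ) (hn : 1 ≤ n) (hdim : Module.finrank ℂ W = n)
    (B : W →ₗ[ℂ] W →ₛₗ[starRingEnd ℂ] ℂ)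
    (hherm : ∀ v w : W, B w v = starRingEnd ℂ (B v w))
    (hneg : ∀ w : W, w ≠ 0 → (B w w).re < 0)
    (r : ℕ) (lam : Fin r → W) (a : Fin r → ℝ) :
    (∃ Q : ℝ, ∀ t t' : W,
        ∑ i, a i * (Fform B (lam i) t t').im = Q * (B t' t).im)
      ↔ ∀ t t' : W, ∑ i, (a i : ℂ) *
          (Fform B (lam i) t t' - (B (lam i) (lam i) / (n : ℂ)) * B t' t) = 0 := by
  have hn0 : (n : ℂ) ≠ 0 := Nat.cast_ne_zero.mpr (by omega)
  have hreal : ∀ v : W, (B v v).im = 0 := by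
    intro v
    have h := congrArg Complex.im (hherm v v)
    simp only [Complex.conj_im] at h
    linarith
  have hzero : ∀ v : W, B v v = 0 → v = 0 := by
    intro v h
    by_contra hv
    have := hneg v hv
    rw [h] at this
    simp at this
  constructor
  · rintro ⟨Q, hQ⟩
    -- Step A : the full complex identity
    have hC : ∀ t t' : W, ∑ i, (a i : ℂ) * Fform B (lam i) t t' = Q * B t' t := by
      intro t t'
      have him : ∀ s s' : W,
          (∑ i, (a i : ℂ) * Fform B (lam i) s s').im = (Q * B s' s : ℂ).im := by
        intro s s'
        rw [Complex.im_sum]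
        have : ∀ i ∈ Finset.univ, ((a i : ℂ) * Fform B (lam i) s s').im
            = a i * (Fform B (lam i) s s').im := by
          intro i _; simp [Complex.im_ofReal_mul]
        rw [Finset.sum_congr rfl this, hQ s s']
        simp [Complex.im_ofReal_mul]
      have h1 := him t t'
      have h2 := him t ((I : ℂ) • t')
      have e1 : ∀ i, Fform B (lam i) t ((I : ℂ) • t') = I * Fform B (lam i) t t' := by
        intro i
        simp only [Fform, map_smul, LinearMap.smul_apply, smul_eq_mul]
        ring
      have e2 : (B ((I : ℂ) • t') t : ℂ) = I * B t' t := by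
        simp [map_smul]
      rw [Finset.sum_congr rfl (fun i _ => by rw [e1 i]), e2] at h2
      have h2' : (∑ i, (a i : ℂ) * Fform B (lam i) t t').re = (Q * B t' t : ℂ).re := by
        have lhs : (∑ i, (a i : ℂ) * (I * Fform B (lam i) t t')).im
            = (∑ i, (a i : ℂ) * Fform B (lam i) t t').re := by
          have : ∑ i, (a i : ℂ) * (I * Fform B (lam i) t t')
              = I * ∑ i, (a i : ℂ) * Fform B (lam i) t t' := by
            rw [Finset.mul_sum]; exact Finset.sum_congr rfl fun i _ => by ring
          rw [this, Complex.mul_im]; simp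
        have rhs : ((Q : ℂ) * (I * B t' t)).im = ((Q : ℂ) * B t' t).re := by
          have : (Q : ℂ) * (I * B t' t) = I * ((Q : ℂ) * B t' t) := by ring
          rw [this, Complex.mul_im]; simp
        rw [lhs, rhs] at h2
        exact h2
      exact Complex.ext h2' h1
    -- Step B : extract the antilinear part
    have hA : ∀ t t' : W, ∑ i, (a i : ℂ) * (B (lam i) t * B t' (lam i)) = Q * B t' t := by
      intro t t'
      have h1 : (∑ i, (a i : ℂ) * (B t (lam i) * B t' (lam i)))
          + ∑ i, (a i : ℂ) * (B (lam i) t * B t' (lam i)) = Q * B t' t := by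
        rw [← Finset.sum_add_distrib, ← hC t t']
        exact Finset.sum_congr rfl fun i _ => by simp [Fform]; ring
      have h2 : (∑ i, (a i : ℂ) * (B t (lam i) * B t' (lam i)))
          - ∑ i, (a i : ℂ) * (B (lam i) t * B t' (lam i)) = -(Q * B t' t) := by
        have key := hC ((I : ℂ) • t) t'
        have e1 : ∀ i, (a i : ℂ) * Fform B (lam i) ((I : ℂ) • t) t'
            = I * ((a i : ℂ) * (B t (lam i) * B t' (lam i))
              - (a i : ℂ) * (B (lam i) t * B t' (lam i))) := by
          intro i
          have eA : (B ((I : ℂ) • t)) (lam i) = I * (B t) (lam i) := by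
            rw [map_smul, LinearMap.smul_apply, smul_eq_mul]
          have eB : (B (lam i)) ((I : ℂ) • t) = -I * (B (lam i)) t := by
            rw [LinearMap.map_smulₛₗ, Complex.conj_I, smul_eq_mul]
          simp only [Fform, eA, eB]
          ring
        have e2 : (B t' ((I : ℂ) • t) : ℂ) = -I * B t' t := by
          rw [LinearMap.map_smulₛₗ, Complex.conj_I, smul_eq_mul]
        rw [Finset.sum_congr rfl (fun i _ => e1 i), e2, ← Finset.mul_sum,
          Finset.sum_sub_distrib] at key
        have := mul_left_cancel₀ Complex.I_ne_zero
          (key.trans (by ring : (Q : ℂ) * (-I * B t' t) = I * (-((Q : ℂ) * B t' t))))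
        exact this
      linear_combination (h1 - h2) / 2
    -- Step C : conjugate identity
    have hA' : ∀ t t' : W, ∑ i, (a i : ℂ) * (B t (lam i) * B (lam i) t') = Q * B t t' := by
      intro t t'
      have := congrArg (starRingEnd ℂ) (hA t t')
      rw [map_sum] at this
      have e : ∀ i ∈ Finset.univ, starRingEnd ℂ ((a i : ℂ) * (B (lam i) t * B t' (lam i)))
          = (a i : ℂ) * (B t (lam i) * B (lam i) t') := by
        intro i _
        rw [map_mul, map_mul, hherm t (lam i), hherm (lam i) t']
        simp
      rw [Finset.sum_congr rfl e] at this
      rw [this, map_mul, hherm t t']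
      simp
    -- Step D : pointwise vector identity
    have hM : ∀ t : W, (∑ i, ((a i : ℂ) * B t (lam i)) • lam i) = (Q : ℂ) • t := by
      intro t
      set v : W := (∑ i, ((a i : ℂ) * B t (lam i)) • lam i) - (Q : ℂ) • t with hv
      have hBv : ∀ t' : W, B v t' = 0 := by
        intro t'
        have expand : B v t' = (∑ i, (a i : ℂ) * (B t (lam i) * B (lam i) t'))
            - (Q : ℂ) * B t t' := by
          rw [hv, map_sub, map_sum, map_smul]
          simp only [LinearMap.sub_apply, LinearMap.sum_apply, LinearMap.smul_apply,
            smul_eq_mul]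
          congr 1
          refine Finset.sum_congr rfl fun i _ => ?_
          rw [map_smul]
          simp only [LinearMap.smul_apply, smul_eq_mul]
          ring
        rw [expand, hA' t t', sub_self]
      have hv0 : v = 0 := hzero v (hBv v)
      rw [hv] at hv0
      exact sub_eq_zero.mp hv0
    -- Step E : take traces
    have htr : (Q : ℂ) * (n : ℂ) = ∑ i, (a i : ℂ) * B (lam i) (lam i) := by
      have hφ : ∀ i : Fin r, ∃ φ : W →ₗ[ℂ] ℂ, ∀ t : W, φ t = B t (lam i) := by
        intro i
        refine ⟨{ toFun := fun t => B t (lam i)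
                  map_add' := fun x y => by simp
                  map_smul' := fun c x => by simp }, fun t => rfl⟩
      choose φ hφ using hφ
      have hMeq : (∑ i, (a i : ℂ) • (φ i).smulRight (lam i)) = (Q : ℂ) • LinearMap.id (R := ℂ) (M := W) := by
        ext t
        simp only [LinearMap.sum_apply, LinearMap.smul_apply, LinearMap.smulRight_apply,
          LinearMap.id_apply, hφ]
        rw [← hM t]
        exact Finset.sum_congr rfl fun i _ => by rw [smul_smul]
      have := congrArg (LinearMap.trace ℂ W) hMeq
      rw [map_sum, map_smul, LinearMap.trace_id, hdim] at this
      simp only [map_smul] at this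
      have e : ∀ i ∈ Finset.univ, (a i : ℂ) • LinearMap.trace ℂ W ((φ i).smulRight (lam i))
          = (a i : ℂ) * B (lam i) (lam i) := by
        intro i _
        rw [trace_rankone, hφ]
        simp
      rw [Finset.sum_congr rfl e] at this
      rw [smul_eq_mul] at this
      exact this.symm
    -- conclude
    intro t t'
    have expand : ∀ i ∈ Finset.univ, (a i : ℂ) *
        (Fform B (lam i) t t' - (B (lam i) (lam i) / (n : ℂ)) * B t' t)
        = (a i : ℂ) * Fform B (lam i) t t'
          - ((a i : ℂ) * B (lam i) (lam i)) * (B t' t / (n : ℂ)) := by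
      intro i _; ring
    rw [Finset.sum_congr rfl expand, Finset.sum_sub_distrib, ← Finset.sum_mul, hC t t', ← htr]
    field_simp
    ring
  · intro h
    refine ⟨(∑ i, a i * (B (lam i) (lam i)).re) / n, fun t t' => ?_⟩
    have hsum : (∑ i, (a i : ℂ) * B (lam i) (lam i))
        = ((∑ i, a i * (B (lam i) (lam i)).re : ℝ) : ℂ) := by
      rw [Complex.ofReal_sum]
      refine Finset.sum_congr rfl fun i _ => ?_
      apply Complex.ext
      · simp [Complex.re_ofReal_mul]
      · simp [Complex.mul_im, hreal]
    have hC : ∑ i, (a i : ℂ) * Fform B (lam i) t t'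
        = ((∑ i, a i * (B (lam i) (lam i)).re : ℝ) : ℂ) / (n : ℂ) * B t' t := by
      have h0 := h t t'
      have expand : ∀ i ∈ Finset.univ, (a i : ℂ) *
          (Fform B (lam i) t t' - (B (lam i) (lam i) / (n : ℂ)) * B t' t)
          = (a i : ℂ) * Fform B (lam i) t t'
            - ((a i : ℂ) * B (lam i) (lam i)) * (B t' t / (n : ℂ)) := by
        intro i _; ring
      rw [Finset.sum_congr rfl expand, Finset.sum_sub_distrib, ← Finset.sum_mul, hsum,
        sub_eq_zero] at h0
      rw [h0]
      ring
    have := congrArg Complex.im hC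
    rw [Complex.im_sum] at this
    have e : ∀ i ∈ Finset.univ, ((a i : ℂ) * Fform B (lam i) t t').im
        = a i * (Fform B (lam i) t t').im := by
      intro i _; simp [Complex.im_ofReal_mul]
    rw [Finset.sum_congr rfl e] at this
    rw [this]
    have : (((∑ i, a i * (B (lam i) (lam i)).re : ℝ) : ℂ) / (n : ℂ) * B t' t).im
        = (∑ i, a i * (B (lam i) (lam i)).re) / (n : ℝ) * (B t' t).im := by
      rw [show (((∑ i, a i * (B (lam i) (lam i)).re : ℝ) : ℂ) / (n : ℂ))
          = (((∑ i, a i * (B (lam i) (lam i)).re) / (n : ℝ) : ℝ) : ℂ) by push_cast; ring]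
      simp [Complex.im_ofReal_mul]
    rw [this]
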